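/- arXiv:2307.13475 — 3 statements merged into one kernel-verified Lean document; each statement's English description precedes it below -/
import Mathlib

section
/- Let $W$ be symmetric positive definite, $D$ full column rank $q\times(p-1)$, $G\in\mathbb{R}^q$ with $\sigma_G = G'W^{1/2}M_dW^{1/2}G > 0$, and $Z_0 \in \mathbb{R}^q$. Define $H = -(D'WD)^{-1}D'W$ and consider $K(u, v) = (Z_0 + Du + \tfrac{1}{2}Gv)'W(Z_0 + Du + \tfrac{1}{2}Gv)$ over $u \in \mathbb{R}^{p-1}$, $v \geq 0$. Then the minimum over $(u,v)$ is attained at $v^* = -2Z\mathbf{1}(Z<0)/\sigma_G$ where $Z = G'W^{1/2}M_dW^{1/2}Z_0$, and $u^* = H(Z_0 + \tfrac{1}{2}Gv^*)$. -/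
open Matrix

lemma aux_dot_t {m n : ℕ} (A : Matrix (Fin m) (Fin n) ℝ) (x : Fin n → ℝ) (y : Fin m → ℝ) :
    (A.mulVec x) ⬝ᵥ y = x ⬝ᵥ (Aᵀ.mulVec y) := by
  rw [dotProduct_comm, Matrix.dotProduct_mulVec, ← Matrix.mulVec_transpose, dotProduct_comm]

lemma aux_dot_self_nonneg {q : ℕ} (x : Fin q → ℝ) : 0 ≤ x ⬝ᵥ x :=
  Finset.sum_nonneg fun i _ => mul_self_nonneg (x i)

lemma aux_pyth {q : ℕ} (m e : Fin q → ℝ) (h : m ⬝ᵥ e = 0) :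
    (m + e) ⬝ᵥ (m + e) = m ⬝ᵥ m + e ⬝ᵥ e := by
  rw [add_dotProduct, dotProduct_add, dotProduct_add, h, dotProduct_comm e m, h]; ring

lemma aux_inj {q r : ℕ} (D : Matrix (Fin q) (Fin r) ℝ) (hD : D.rank = r) :
    Function.Injective D.mulVec := by
  have h := D.mulVecLin.finrank_range_add_finrank_ker
  unfold Matrix.rank at hD
  rw [hD, Module.finrank_fin_fun] at h
  have hker : Module.finrank ℝ (LinearMap.ker D.mulVecLin) = 0 := by omega
  have : LinearMap.ker D.mulVecLin = ⊥ := Submodule.finrank_eq_zero.mp hker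
  have := LinearMap.ker_eq_bot.mp this
  exact this

lemma aux_scalar (c0 Z σG vstar v : ℝ) (hσGpos : 0 < σG)
    (hvstar : vstar = -2 * Z * (if Z < 0 then (1 : ℝ) else 0) / σG) (hv : 0 ≤ v) :
    c0 + vstar * Z + vstar ^ 2 / 4 * σG ≤ c0 + v * Z + v ^ 2 / 4 * σG := by
  by_cases h : Z < 0
  · have hveq : vstar * σG = -2 * Z := by
      rw [hvstar, if_pos h]
      field_simp
    have hz : (v - vstar) * (vstar * σG + 2 * Z) = 0 := by
      have : vstar * σG + 2 * Z = 0 := by linarith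
      rw [this]; ring
    nlinarith [hz, mul_nonneg hσGpos.le (sq_nonneg (v - vstar))]
  · have h0 : vstar = 0 := by rw [hvstar, if_neg h]; ring
    push_neg at h
    rw [h0]
    nlinarith [mul_nonneg hv h, mul_nonneg (mul_nonneg hv hv) hσGpos.le]

/-- the minimum of
`K(u,v) = (Z₀ + Du + (v/2)G)' W (Z₀ + Du + (v/2)G)` over `u ∈ ℝ^{p-1}`,
`v ≥ 0` is attained at `v* = -2Z·1(Z<0)/σ_G`, `u* = H(Z₀ + (v*/2)G)`. -/
theorem stmt_6 {q r : ℕ}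
    (W Whalf : Matrix (Fin q) (Fin q) ℝ)
    (hW : W.PosDef) (hWhalf : Whalf.PosDef) (hWhalfsym : Whalfᵀ = Whalf)
    (hsq : Whalf * Whalf = W)
    (D : Matrix (Fin q) (Fin r) ℝ) (hD : D.rank = r)
    (G Z0 : Fin q → ℝ)
    (Md : Matrix (Fin q) (Fin q) ℝ)
    (hMd : Md = 1 - Whalf * D * (Dᵀ * W * D)⁻¹ * Dᵀ * Whalf)
    (σG : ℝ) (hσG : σG = G ⬝ᵥ (Whalf * Md * Whalf).mulVec G) (hσGpos : 0 < σG)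
    (H : Matrix (Fin r) (Fin q) ℝ) (hH : H = -((Dᵀ * W * D)⁻¹ * Dᵀ * W))
    (K : (Fin r → ℝ) → ℝ → ℝ)
    (hK : ∀ u v, K u v =
      (Z0 + D.mulVec u + (v / 2) • G) ⬝ᵥ W.mulVec (Z0 + D.mulVec u + (v / 2) • G))
    (Z : ℝ) (hZ : Z = G ⬝ᵥ (Whalf * Md * Whalf).mulVec Z0)
    (vstar : ℝ) (hvstar : vstar = -2 * Z * (if Z < 0 then (1 : ℝ) else 0) / σG)
    (ustar : Fin r → ℝ) (hustar : ustar = H.mulVec (Z0 + (vstar / 2) • G)) :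
    0 ≤ vstar ∧ ∀ (u : Fin r → ℝ) (v : ℝ), 0 ≤ v → K ustar vstar ≤ K u v := by
  classical
  have hWsym : Wᵀ = W := hW.1
  set B : Matrix (Fin r) (Fin r) ℝ := Dᵀ * W * D with hBdef
  have hDinj := aux_inj D hD
  have hBsym : Bᵀ = B := by
    rw [hBdef]; simp [Matrix.transpose_mul, Matrix.mul_assoc, hWsym]
  have hBpos : B.PosDef := by
    refine Matrix.PosDef.of_dotProduct_mulVec_pos ?_ ?_
    · show Bᴴ = B
      rw [Matrix.conjTranspose_eq_transpose_of_trivial]; exact hBsym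
    · intro x hx
      have hDx : D.mulVec x ≠ 0 := by
        intro h
        exact hx (hDinj (by simpa using h))
      have h2 := hW.dotProduct_mulVec_pos hDx
      simp only [star_trivial] at h2 ⊢
      rw [hBdef, ← Matrix.mulVec_mulVec, ← Matrix.mulVec_mulVec, ← aux_dot_t]
      simpa using h2
  have hdet : IsUnit B.det := hBpos.det_pos.ne'.isUnit
  have hB1 : B⁻¹ * B = 1 := Matrix.nonsing_inv_mul B hdet
  have hBsymInv : (B⁻¹)ᵀ = B⁻¹ := by rw [Matrix.transpose_nonsing_inv, hBsym]
  set P : Matrix (Fin q) (Fin q) ℝ := Whalf * D * B⁻¹ * Dᵀ * Whalf with hPdef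
  have hMd' : Md = 1 - P := hMd
  have hcross : Dᵀ * Whalf * (Whalf * D) = B := by
    rw [hBdef, ← hsq]; simp [Matrix.mul_assoc]
  have hPD : P * (Whalf * D) = Whalf * D := by
    calc P * (Whalf * D)
        = Whalf * D * B⁻¹ * (Dᵀ * Whalf * (Whalf * D)) := by
          simp only [hPdef, Matrix.mul_assoc]
      _ = Whalf * D * (B⁻¹ * B) := by rw [hcross]; simp [Matrix.mul_assoc]
      _ = Whalf * D := by rw [hB1, Matrix.mul_one]
  have hPalt : P = (Whalf * D) * (B⁻¹ * Dᵀ * Whalf) := by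
    simp only [hPdef, Matrix.mul_assoc]
  have hPP : P * P = P := by
    nth_rewrite 2 [hPalt]
    rw [← Matrix.mul_assoc, hPD, ← hPalt]
  have hPsym : Pᵀ = P := by
    rw [hPdef]
    simp [Matrix.transpose_mul, Matrix.transpose_transpose, hWhalfsym, hBsymInv,
      Matrix.mul_assoc]
  have hMdsym : Mdᵀ = Md := by
    rw [hMd']; simp [Matrix.transpose_sub, Matrix.transpose_one, hPsym]
  have hMdP : Md * P = 0 := by rw [hMd', Matrix.sub_mul, Matrix.one_mul, hPP, sub_self]
  have hMdWD : Md * (Whalf * D) = 0 := by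
    rw [hMd', Matrix.sub_mul, Matrix.one_mul, hPD, sub_self]
  have hMdMd : Md * Md = Md := by
    rw [hMd', Matrix.sub_mul, Matrix.one_mul, Matrix.mul_sub, Matrix.mul_one, hPP,
      sub_self, sub_zero]
  set S : Matrix (Fin q) (Fin q) ℝ := Whalf * Md * Whalf with hSdef
  have hSsym : Sᵀ = S := by
    rw [hSdef]; simp [Matrix.transpose_mul, hWhalfsym, hMdsym, Matrix.mul_assoc]
  set N : Matrix (Fin q) (Fin q) ℝ := Md * Whalf with hNdef
  have hNt : Nᵀ = Whalf * Md := by simp [hNdef, Matrix.transpose_mul, hWhalfsym, hMdsym]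
  have hNtN : Nᵀ * N = S := by
    rw [hNt, hNdef, hSdef]
    calc Whalf * Md * (Md * Whalf) = Whalf * (Md * Md) * Whalf := by
          simp [Matrix.mul_assoc]
      _ = Whalf * Md * Whalf := by rw [hMdMd]
  have hPWh : P * Whalf = Whalf * D * (B⁻¹ * (Dᵀ * W)) := by
    rw [hPdef]; simp only [Matrix.mul_assoc]; rw [hsq]
  have hsum : P * Whalf + Whalf * D * H = 0 := by
    rw [hPWh, hH]
    simp [Matrix.mul_assoc, Matrix.mul_neg]
  have hquad : ∀ x : Fin q → ℝ, x ⬝ᵥ W.mulVec x = (Whalf.mulVec x) ⬝ᵥ (Whalf.mulVec x) := by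
    intro x
    rw [aux_dot_t, hWhalfsym, Matrix.mulVec_mulVec, hsq]
  set zf : ℝ → (Fin q → ℝ) := fun v => Z0 + (v / 2) • G with hzf
  set E : (Fin r → ℝ) → ℝ → (Fin q → ℝ) :=
    fun u v => P.mulVec (Whalf.mulVec (zf v)) + (Whalf * D).mulVec u with hEdef
  set c0 : ℝ := (N.mulVec Z0) ⬝ᵥ (N.mulVec Z0) with hc0
  have habZ : (N.mulVec Z0) ⬝ᵥ (N.mulVec G) = Z := by
    rw [aux_dot_t, Matrix.mulVec_mulVec, hNtN, dotProduct_comm, aux_dot_t, hSsym]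
    exact hZ.symm
  have hbb : (N.mulVec G) ⬝ᵥ (N.mulVec G) = σG := by
    rw [aux_dot_t, Matrix.mulVec_mulVec, hNtN]
    exact hσG.symm
  have stepA : ∀ u v, K u v =
      (N.mulVec (zf v)) ⬝ᵥ (N.mulVec (zf v)) + (E u v) ⬝ᵥ (E u v) := by
    intro u v
    have hx : Z0 + D.mulVec u + (v / 2) • G = zf v + D.mulVec u := by
      simp only [hzf]; abel
    have h1 : Md.mulVec (Whalf.mulVec (zf v)) + P.mulVec (Whalf.mulVec (zf v))
        = Whalf.mulVec (zf v) := by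
      rw [← Matrix.add_mulVec, hMd', sub_add_cancel, Matrix.one_mulVec]
    have hNm : N.mulVec (zf v) = Md.mulVec (Whalf.mulVec (zf v)) := by
      rw [hNdef, Matrix.mulVec_mulVec]
    have horth : (N.mulVec (zf v)) ⬝ᵥ (E u v) = 0 := by
      rw [hNm, aux_dot_t, hMdsym]
      have hE0 : Md.mulVec (E u v) = 0 := by
        simp only [hEdef]
        rw [Matrix.mulVec_add, Matrix.mulVec_mulVec _ Md P,
          Matrix.mulVec_mulVec _ Md (Whalf * D), hMdP, hMdWD,
          Matrix.zero_mulVec, Matrix.zero_mulVec, add_zero]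
      rw [hE0, dotProduct_zero]
    have hs : Whalf.mulVec (zf v + D.mulVec u) = N.mulVec (zf v) + E u v := by
      rw [Matrix.mulVec_add]
      simp only [hEdef]
      rw [hNm, ← add_assoc, h1, Matrix.mulVec_mulVec]
    rw [hK, hx, hquad, hs, aux_pyth _ _ horth]
  have stepB : ∀ v, (N.mulVec (zf v)) ⬝ᵥ (N.mulVec (zf v)) = c0 + v * Z + v ^ 2 / 4 * σG := by
    intro v
    have hNz : N.mulVec (zf v) = N.mulVec Z0 + (v / 2) • N.mulVec G := by
      simp only [hzf]; rw [Matrix.mulVec_add, Matrix.mulVec_smul]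
    rw [hNz]
    simp only [add_dotProduct, dotProduct_add, smul_dotProduct, dotProduct_smul,
      smul_eq_mul]
    rw [dotProduct_comm (N.mulVec G) (N.mulVec Z0), habZ, hbb, ← hc0]
    ring
  have stepC : ∀ v, E (H.mulVec (zf v)) v = 0 := by
    intro v
    simp only [hEdef]
    have h2 := congrArg (fun M : Matrix (Fin q) (Fin q) ℝ => M.mulVec (zf v)) hsum
    simp only [Matrix.add_mulVec, Matrix.zero_mulVec] at h2
    rw [Matrix.mulVec_mulVec _ P Whalf, Matrix.mulVec_mulVec _ (Whalf * D) H]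
    exact h2
  have hvpos : 0 ≤ vstar := by
    rw [hvstar]; split_ifs with h
    · have h1 : (0:ℝ) ≤ -2 * Z * 1 := by nlinarith
      exact div_nonneg h1 hσGpos.le
    · simp
  refine ⟨hvpos, ?_⟩
  intro u v hv
  have hus : ustar = H.mulVec (zf vstar) := hustar
  have hKu : K ustar vstar = c0 + vstar * Z + vstar ^ 2 / 4 * σG := by
    rw [hus, stepA, stepC, dotProduct_zero, add_zero, stepB]
  have hKl : c0 + v * Z + v ^ 2 / 4 * σG ≤ K u v := by
    rw [stepA u v, stepB v]
    have := aux_dot_self_nonneg (E u v)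
    linarith
  have hscalar := aux_scalar c0 Z σG vstar v hσGpos hvstar hv
  rw [hKu]
  linarith
end

section
/- Let $q > p$ and let $(\mathbb{Z}_0, \mathbb{Z}_1)$ be jointly Gaussian mean-zero $\mathbb{R}^q \times \mathbb{R}^q$ with full-rank joint covariance. With $M_{dg}$ of rank $q-p > 0$ as above, and any fixed vectors/matrices $L$, $G_{1p}$, $H$, $G$, $\sigma_G > 0$, the random variable $\mathbb{R}_1 = (\mathbb{Z}_0'W^{1/2}P_gW^{1/2}\mathbb{Z}_0 G' - G'W^{1/2}P_gW^{1/2}\mathbb{Z}_0\mathbb{Z}_0')W^{1/2}M_dW^{1/2}(\tfrac{1}{3}L + G_{1p}HG)/\sigma_G + \mathbb{Z}_0'W^{1/2}M_{dg}W^{1/2}(\mathbb{Z}_1 + G_{1p}H\mathbb{Z}_0)$ satisfies $\Pr(\mathbb{R}_1 = 0) = 0$. -/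
open Matrix MeasureTheory ProbabilityTheory

lemma gaussPi_ac (n : ℕ) :
    Measure.pi (fun _ : Fin n => gaussianReal 0 1) ≪ (volume : Measure (Fin n → ℝ)) := by
  induction n with
  | zero =>
    intro s hs
    rcases Set.eq_empty_or_nonempty s with rfl | ⟨x, hx⟩
    · simp
    · exfalso
      have hsu : s = Set.univ := by
        ext y
        simp only [Set.mem_univ, iff_true]
        have : y = x := funext fun i => i.elim0
        rwa [this]
      rw [hsu] at hs
      rw [volume_pi, Measure.pi_univ] at hs
      simp at hs
  | succ n ih =>
    set e := MeasurableEquiv.piFinSuccAbove (fun _ : Fin (n+1) => ℝ) 0 with he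
    have hg : Measure.pi (fun _ : Fin (n+1) => gaussianReal 0 1)
        = ((gaussianReal 0 1).prod (Measure.pi fun _ : Fin n => gaussianReal 0 1)).map e.symm :=
      ((measurePreserving_piFinSuccAbove (fun _ : Fin (n+1) => gaussianReal 0 1) 0).symm e).map_eq.symm
    have hv : ((volume : Measure ℝ).prod (volume : Measure (Fin n → ℝ))).map e.symm
        = (volume : Measure (Fin (n+1) → ℝ)) := by
      have := ((measurePreserving_piFinSuccAbove (fun _ : Fin (n+1) => (volume : Measure ℝ)) 0).symm e).map_eq
      simpa [volume_pi] using this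
    rw [hg, ← hv]
    exact (((gaussianReal_absolutelyContinuous 0 one_ne_zero)).prod ih).map e.symm.measurable

lemma dot_hyperplane {n : ℕ} {c : Fin n → ℝ} (hc : c ≠ 0) (d : ℝ) :
    (volume : Measure (Fin n → ℝ)) {z | c ⬝ᵥ z = d} = 0 := by
  have hcc : c ⬝ᵥ c ≠ 0 := by
    simpa [dotProduct_self_eq_zero] using hc
  set f : (Fin n → ℝ) →ₗ[ℝ] ℝ :=
    { toFun := fun z => c ⬝ᵥ z
      map_add' := fun x y => dotProduct_add c x y
      map_smul' := fun r x => by simp [dotProduct_smul, smul_eq_mul] }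
  have hker : LinearMap.ker f ≠ ⊤ := by
    intro h
    have : f c = 0 := by rw [← LinearMap.mem_ker, h]; trivial
    exact hcc this
  set x₀ : Fin n → ℝ := (d / (c ⬝ᵥ c)) • c with hx₀
  have hpre : (fun z => x₀ + z) ⁻¹' {z | c ⬝ᵥ z = d} = (LinearMap.ker f : Set (Fin n → ℝ)) := by
    ext z
    simp only [Set.mem_preimage, Set.mem_setOf_eq, SetLike.mem_coe, LinearMap.mem_ker]
    have h0 : c ⬝ᵥ x₀ = d := by
      rw [hx₀, dotProduct_smul, smul_eq_mul, div_mul_cancel₀ _ hcc]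
    constructor
    · intro h
      have : c ⬝ᵥ x₀ + c ⬝ᵥ z = d := by rw [← dotProduct_add]; exact h
      have : c ⬝ᵥ z = 0 := by linarith [h0]
      exact this
    · intro h
      have h' : c ⬝ᵥ z = 0 := h
      show c ⬝ᵥ (x₀ + z) = d
      rw [dotProduct_add, h0, h', add_zero]
  calc (volume : Measure (Fin n → ℝ)) {z | c ⬝ᵥ z = d}
      = volume ((fun z => x₀ + z) ⁻¹' {z | c ⬝ᵥ z = d}) := (measure_preimage_add _ _ _).symm
    _ = volume (LinearMap.ker f : Set (Fin n → ℝ)) := by rw [hpre]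
    _ = 0 := Measure.addHaar_submodule _ _ hker

lemma gaussPiSum_ac (q : ℕ) :
    Measure.pi (fun _ : Fin q ⊕ Fin q => gaussianReal 0 1)
      ≪ (volume : Measure ((Fin q ⊕ Fin q) → ℝ)) := by
  set e := MeasurableEquiv.sumPiEquivProdPi (fun _ : Fin q ⊕ Fin q => ℝ) with he
  have hg : Measure.pi (fun _ : Fin q ⊕ Fin q => gaussianReal 0 1)
      = ((Measure.pi fun _ : Fin q => gaussianReal 0 1).prod
          (Measure.pi fun _ : Fin q => gaussianReal 0 1)).map e.symm :=
    (measurePreserving_sumPiEquivProdPi_symm (fun _ : Fin q ⊕ Fin q => gaussianReal 0 1)).map_eq.symm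
  have hv : ((volume : Measure (Fin q → ℝ)).prod (volume : Measure (Fin q → ℝ))).map e.symm
      = (volume : Measure ((Fin q ⊕ Fin q) → ℝ)) := by
    have := (measurePreserving_sumPiEquivProdPi_symm (fun _ : Fin q ⊕ Fin q => (volume : Measure ℝ))).map_eq
    simpa [volume_pi] using this
  rw [hg, ← hv]
  exact ((gaussPi_ac q).prod (gaussPi_ac q)).map e.symm.measurable

/-- Lemma 2(a2): in the overidentified case `q > p`, with
`(𝒵₀, 𝒵₁)` jointly Gaussian mean-zero with full-rank joint covariance and
`M_{dg}` of rank `q - p > 0`, the random variable `ℝ₁` satisfies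
`Pr(ℝ₁ = 0) = 0`. -/
theorem stmt_12 {q r : ℕ} (hqp : q > r + 1)
    (W Whalf : Matrix (Fin q) (Fin q) ℝ)
    (hW : W.PosDef) (hWhalf : Whalf.PosDef) (hWhalfsym : Whalfᵀ = Whalf)
    (hsq : Whalf * Whalf = W)
    (D : Matrix (Fin q) (Fin r) ℝ) (hD : D.rank = r)
    (G : Fin q → ℝ)
    (hDG : (Matrix.fromCols D (Matrix.replicateCol (Fin 1) G)).rank = r + 1)
    (Md Pg Mdg : Matrix (Fin q) (Fin q) ℝ)
    (hMd : Md = 1 - Whalf * D * (Dᵀ * W * D)⁻¹ * Dᵀ * Whalf)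
    (σG : ℝ) (hσG : σG = G ⬝ᵥ (Whalf * Md * Whalf).mulVec G) (hσGpos : 0 < σG)
    (hPg : Pg = σG⁻¹ •
      Matrix.vecMulVec (Md.mulVec (Whalf.mulVec G)) (Md.mulVec (Whalf.mulVec G)))
    (hMdg : Mdg = Md - Pg) (hMdgrank : Mdg.rank = q - (r + 1))
    (H : Matrix (Fin r) (Fin q) ℝ) (hH : H = -((Dᵀ * W * D)⁻¹ * Dᵀ * W))
    (L : Fin q → ℝ) (G1p : Matrix (Fin q) (Fin r) ℝ)
    {Ω : Type*} [MeasurableSpace Ω] (P : Measure Ω) [IsProbabilityMeasure P]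
    (Z0 Z1 : Ω → Fin q → ℝ)
    (ξ : Ω → (Fin q ⊕ Fin q) → ℝ)
    (hmeas : ∀ i, Measurable (fun ω => ξ ω i))
    (hiid : iIndepFun (fun i ω => ξ ω i) P)
    (hlaw : ∀ i, Measure.map (fun ω => ξ ω i) P = gaussianReal 0 1)
    (A : Matrix (Fin q ⊕ Fin q) (Fin q ⊕ Fin q) ℝ) (hA : IsUnit A)
    (hZ : ∀ ω, Sum.elim (Z0 ω) (Z1 ω) = A.mulVec (ξ ω))
    (R1 : Ω → ℝ)
    (hR1 : ∀ ω, R1 ω =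
      (((Z0 ω ⬝ᵥ (Whalf * Pg * Whalf).mulVec (Z0 ω)) • G
          - (G ⬝ᵥ (Whalf * Pg * Whalf).mulVec (Z0 ω)) • Z0 ω) ⬝ᵥ
        (Whalf * Md * Whalf).mulVec ((1 / 3 : ℝ) • L + G1p.mulVec (H.mulVec G))) / σG
      + Z0 ω ⬝ᵥ (Whalf * Mdg * Whalf).mulVec (Z1 ω + G1p.mulVec (H.mulVec (Z0 ω)))) :
    P {ω | R1 ω = 0} = 0 := by
  classical
  -- the matrix `B`
  set B : Matrix (Fin q) (Fin q) ℝ := Whalf * Mdg * Whalf with hBdef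
  have hdetW : IsUnit Whalf.det := isUnit_iff_ne_zero.mpr (ne_of_gt hWhalf.det_pos)
  have hMdgne : Mdg ≠ 0 := by
    intro h
    rw [h, Matrix.rank_zero] at hMdgrank
    omega
  have hBne : B ≠ 0 := by
    intro h
    apply hMdgne
    have h1 : Whalf⁻¹ * B * Whalf⁻¹ = Mdg := by
      rw [hBdef]
      calc Whalf⁻¹ * (Whalf * Mdg * Whalf) * Whalf⁻¹
          = (Whalf⁻¹ * Whalf) * Mdg * (Whalf * Whalf⁻¹) := by
            simp only [Matrix.mul_assoc]
        _ = Mdg := by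
            rw [Matrix.nonsing_inv_mul _ hdetW, Matrix.mul_nonsing_inv _ hdetW,
              Matrix.one_mul, Matrix.mul_one]
    rw [h] at h1
    simp only [Matrix.mul_zero, Matrix.zero_mul] at h1
    exact h1.symm
  obtain ⟨i0, j0, hij⟩ : ∃ i j, B i j ≠ 0 := by
    by_contra h
    push_neg at h
    exact hBne (by ext i j; simpa using h i j)
  -- the polynomial function F
  set F : ((Fin q ⊕ Fin q) → ℝ) → ℝ := fun z =>
    ((((z ∘ Sum.inl) ⬝ᵥ (Whalf * Pg * Whalf).mulVec (z ∘ Sum.inl)) • G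
        - (G ⬝ᵥ (Whalf * Pg * Whalf).mulVec (z ∘ Sum.inl)) • (z ∘ Sum.inl)) ⬝ᵥ
      (Whalf * Md * Whalf).mulVec ((1 / 3 : ℝ) • L + G1p.mulVec (H.mulVec G))) / σG
    + (z ∘ Sum.inl) ⬝ᵥ B.mulVec ((z ∘ Sum.inr) + G1p.mulVec (H.mulVec (z ∘ Sum.inl)))
    with hFdef
  have hFR : ∀ ω, R1 ω = F (A.mulVec (ξ ω)) := by
    intro ω
    rw [← hZ ω, hR1 ω]
    rfl
  -- continuity of F
  have hz0c : Continuous (fun z : (Fin q ⊕ Fin q) → ℝ => z ∘ Sum.inl) :=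
    continuous_pi fun i => continuous_apply _
  have hz1c : Continuous (fun z : (Fin q ⊕ Fin q) → ℝ => z ∘ Sum.inr) :=
    continuous_pi fun i => continuous_apply _
  have hFcont : Continuous F := by
    apply Continuous.add
    · apply Continuous.div_const
      apply Continuous.dotProduct _ continuous_const
      exact ((hz0c.dotProduct (continuous_const.matrix_mulVec hz0c)).smul
          continuous_const).sub
        ((continuous_const.dotProduct (continuous_const.matrix_mulVec hz0c)).smul hz0c)
    · exact hz0c.dotProduct (continuous_const.matrix_mulVec
        (hz1c.add (continuous_const.matrix_mulVec (continuous_const.matrix_mulVec hz0c))))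
  set S : Set ((Fin q ⊕ Fin q) → ℝ) := {z | F z = 0} with hSdef
  have hS : MeasurableSet S := hFcont.measurable (measurableSet_singleton (0:ℝ))
  -- joint law of ξ
  have hξm : Measurable (fun ω => ξ ω) := measurable_pi_lambda _ hmeas
  have hpi : P.map (fun ω => ξ ω)
      = Measure.pi (fun _ : Fin q ⊕ Fin q => gaussianReal 0 1) := by
    refine (Measure.pi_eq fun s hs => ?_).symm
    rw [Measure.map_apply hξm (MeasurableSet.univ_pi hs)]
    have hpre : (fun ω => ξ ω) ⁻¹' Set.univ.pi s
        = ⋂ i ∈ Finset.univ, (fun ω => ξ ω i) ⁻¹' s i := by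
      ext ω; simp [Set.mem_pi]
    rw [hpre, hiid.measure_inter_preimage_eq_mul Finset.univ (fun i _ => hs i)]
    refine Finset.prod_congr rfl fun i _ => ?_
    rw [← hlaw i, Measure.map_apply (hmeas i) (hs i)]
  -- measurability of mulVec
  have hmv : Measurable (A.mulVec) :=
    (continuous_const.matrix_mulVec continuous_id).measurable
  have hlawZ : P.map (fun ω => A.mulVec (ξ ω))
      = (Measure.pi fun _ : Fin q ⊕ Fin q => gaussianReal 0 1).map A.mulVec := by
    rw [← hpi, Measure.map_map hmv hξm]
    rfl
  have hdetA : A.det ≠ 0 := ((Matrix.isUnit_iff_isUnit_det A).mp hA).ne_zero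
  have hac : P.map (fun ω => A.mulVec (ξ ω)) ≪ (volume : Measure ((Fin q ⊕ Fin q) → ℝ)) := by
    rw [hlawZ]
    refine ((gaussPiSum_ac q).map hmv).trans ?_
    have hco : A.mulVec = ⇑(Matrix.toLin' A) := funext fun v => (Matrix.toLin'_apply A v).symm
    rw [hco, Real.map_matrix_volume_pi_eq_smul_volume_pi hdetA]
    exact Measure.smul_absolutelyContinuous
  -- volume of the zero set of F
  have hvolS : (volume : Measure ((Fin q ⊕ Fin q) → ℝ)) S = 0 := by
    set e := MeasurableEquiv.sumPiEquivProdPi (fun _ : Fin q ⊕ Fin q => ℝ) with he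
    have hveq : ((volume : Measure (Fin q → ℝ)).prod (volume : Measure (Fin q → ℝ))).map e.symm
        = (volume : Measure ((Fin q ⊕ Fin q) → ℝ)) := by
      have := (measurePreserving_sumPiEquivProdPi_symm
        (fun _ : Fin q ⊕ Fin q => (volume : Measure ℝ))).map_eq
      simpa [volume_pi] using this
    have helim : ∀ (x0 x1 : Fin q → ℝ), e.symm (x0, x1) = Sum.elim x0 x1 := by
      intro x0 x1
      funext i
      cases i <;> rfl
    -- split F
    have hFsplit : ∀ (x0 x1 : Fin q → ℝ), F (Sum.elim x0 x1)
        = (((x0 ⬝ᵥ (Whalf * Pg * Whalf).mulVec x0) • G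
              - (G ⬝ᵥ (Whalf * Pg * Whalf).mulVec x0) • x0) ⬝ᵥ
            (Whalf * Md * Whalf).mulVec ((1 / 3 : ℝ) • L + G1p.mulVec (H.mulVec G))) / σG
          + x0 ⬝ᵥ B.mulVec (G1p.mulVec (H.mulVec x0))
          + (x0 ᵥ* B) ⬝ᵥ x1 := by
      intro x0 x1
      simp only [hFdef, Sum.elim_comp_inl, Sum.elim_comp_inr, Matrix.mulVec_add,
        dotProduct_add]
      rw [Matrix.dotProduct_mulVec x0 B x1]
      ring
    -- the bad set of x0 has measure zero
    have hbad : (volume : Measure (Fin q → ℝ)) {x0 | x0 ᵥ* B = 0} = 0 := by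
      have hset : {x0 : Fin q → ℝ | x0 ᵥ* B = 0}
          = (LinearMap.ker B.vecMulLinear : Set (Fin q → ℝ)) := by
        ext x0
        simp [LinearMap.mem_ker]
      rw [hset]
      refine Measure.addHaar_submodule _ _ ?_
      intro htop
      have : Pi.single i0 (1:ℝ) ᵥ* B = 0 := by
        have hmem : Pi.single i0 (1:ℝ) ∈ LinearMap.ker B.vecMulLinear := by
          rw [htop]; trivial
        simpa [LinearMap.mem_ker] using hmem
      have := congr_fun this j0
      rw [Matrix.single_one_vecMul] at this
      exact hij this
    have haegood : ∀ᵐ x0 ∂(volume : Measure (Fin q → ℝ)), x0 ᵥ* B ≠ 0 := by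
      rw [ae_iff]
      have : {x0 : Fin q → ℝ | ¬ x0 ᵥ* B ≠ 0} = {x0 | x0 ᵥ* B = 0} := by
        ext x0; simp
      rw [this]
      exact hbad
    have hSm' : MeasurableSet (e.symm ⁻¹' S) := e.symm.measurable hS
    calc (volume : Measure ((Fin q ⊕ Fin q) → ℝ)) S
        = ((volume : Measure (Fin q → ℝ)).prod volume).map e.symm S := by rw [hveq]
      _ = ((volume : Measure (Fin q → ℝ)).prod volume) (e.symm ⁻¹' S) :=
          Measure.map_apply e.symm.measurable hS
      _ = ∫⁻ x0, volume (Prod.mk x0 ⁻¹' (e.symm ⁻¹' S)) := Measure.prod_apply hSm'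
      _ = 0 := by
          have hz : ∀ᵐ x0 ∂(volume : Measure (Fin q → ℝ)),
              volume (Prod.mk x0 ⁻¹' (e.symm ⁻¹' S)) = 0 := by
            filter_upwards [haegood] with x0 hx0
            have hseteq : Prod.mk x0 ⁻¹' (e.symm ⁻¹' S)
                = {x1 : Fin q → ℝ | (x0 ᵥ* B) ⬝ᵥ x1
                    = -((((x0 ⬝ᵥ (Whalf * Pg * Whalf).mulVec x0) • G
                          - (G ⬝ᵥ (Whalf * Pg * Whalf).mulVec x0) • x0) ⬝ᵥ
                        (Whalf * Md * Whalf).mulVec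
                          ((1 / 3 : ℝ) • L + G1p.mulVec (H.mulVec G))) / σG
                      + x0 ⬝ᵥ B.mulVec (G1p.mulVec (H.mulVec x0)))} := by
              ext x1
              simp only [Set.mem_preimage, Set.mem_setOf_eq, hSdef, helim, hFsplit]
              constructor
              · intro h; linarith
              · intro h; linarith
            rw [hseteq]
            exact dot_hyperplane hx0 _
          rw [lintegral_congr_ae hz, lintegral_zero]
  -- conclusion
  have hset : {ω | R1 ω = 0} = (fun ω => A.mulVec (ξ ω)) ⁻¹' S := by
    ext ω
    simp only [Set.mem_setOf_eq, Set.mem_preimage, hSdef, hFR ω]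
  rw [hset]
  have hzm : Measurable (fun ω => A.mulVec (ξ ω)) := hmv.comp hξm
  rw [← Measure.map_apply hzm hS]
  exact hac hvolS
end

section
/- Let $m: \mathbb{R}^p \to \mathbb{R}^q$ be twice continuously differentiable with Jacobian $M = Dm(\phi_0)$ and second-derivative arrays $M_k^{(2)} = D^2 m_k(\phi_0)$, $k = 1,\ldots,q$. Suppose the second-order local identification condition holds: for all $u$ in the range of $M'$ and all $v$ in the null space of $M$, $Mu + (v'M_k^{(2)}v)_{1\le k\le q} = 0$ implies $u = v = 0$. Then there is no sequence $\phi_n \to \phi_0$ with $\phi_n \neq \phi_0$ and $m(\phi_n) = m(\phi_0)$ for all $n$; i.e., $\phi_0$ is locally identified by $m(\phi) = m(\phi_0)$. -/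
open Filter

set_option maxHeartbeats 1000000

section Aux

variable {E F : Type*} [NormedAddCommGroup E] [InnerProductSpace ℝ E]
  [NormedAddCommGroup F] [InnerProductSpace ℝ F]
  [FiniteDimensional ℝ E] [FiniteDimensional ℝ F]

/-- If `b` is orthogonal to `ker M†`, then `b = M (M† y)` for some `y`. -/
lemma exists_adjoint_solution (M : E →L[ℝ] F) (b : F)
    (hb : ∀ w : F, ContinuousLinearMap.adjoint M w = 0 → inner ℝ b w = (0:ℝ)) :
    ∃ y : F, M (ContinuousLinearMap.adjoint M y) = b := by
  set T : F →L[ℝ] F := M ∘L ContinuousLinearMap.adjoint M with hT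
  set S : Submodule ℝ F := LinearMap.range (T : F →ₗ[ℝ] F) with hS
  have hbS : b ∈ S := by
    rw [← Submodule.orthogonal_orthogonal S]
    rw [Submodule.mem_orthogonal]
    intro w hw
    have hw' : ContinuousLinearMap.adjoint M w = 0 := by
      have h0 : (inner ℝ (T w) w : ℝ) = 0 :=
        (Submodule.mem_orthogonal S w).1 hw (T w) (LinearMap.mem_range_self _ w)
      have h1 : (inner ℝ (T w) w : ℝ)
          = inner ℝ (ContinuousLinearMap.adjoint M w) (ContinuousLinearMap.adjoint M w) := by
        rw [hT]
        simp only [ContinuousLinearMap.comp_apply]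
        exact (ContinuousLinearMap.adjoint_inner_right M _ _).symm
      rw [h1] at h0
      exact inner_self_eq_zero.1 h0
    rw [real_inner_comm]
    exact hb w hw'
  obtain ⟨y, hy⟩ := hbS
  exact ⟨y, hy⟩

/-- Second-order Taylor bound. -/
lemma taylor2 {m : E → F} (hm : ContDiff ℝ 2 m) (φ0 : E) {ε : ℝ} (hε : 0 < ε) :
    ∃ δ > 0, ∀ h : E, ‖h‖ ≤ δ →
      ‖m (φ0 + h) - m φ0 - fderiv ℝ m φ0 h
        - (2⁻¹ : ℝ) • fderiv ℝ (fderiv ℝ m) φ0 h h‖ ≤ ε * ‖h‖ ^ 2 := by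
  set g := fderiv ℝ m with hg
  set M := g φ0 with hM
  set B := fderiv ℝ g φ0 with hB
  have hdiff : Differentiable ℝ m := hm.differentiable (by norm_num)
  have hg1 : ContDiff ℝ 1 g := hm.fderiv_right (by norm_num)
  have hgB : HasFDerivAt g B φ0 := (hg1.differentiable one_ne_zero φ0).hasFDerivAt
  have hsymm : ∀ v w, B v w = B w v :=
    second_derivative_symmetric (fun y => (hdiff y).hasFDerivAt) hgB
  have hlo := hgB.isLittleO
  obtain ⟨δ, hδpos, hδ⟩ : ∃ δ > 0, ∀ x : E, dist x φ0 < δ →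
      ‖g x - M - B (x - φ0)‖ ≤ ε * ‖x - φ0‖ := by
    have h2 := Metric.eventually_nhds_iff.1 (hlo.def hε)
    obtain ⟨δ, hδpos, hδ⟩ := h2
    exact ⟨δ, hδpos, fun x hx => by simpa [sub_sub] using hδ hx⟩
  refine ⟨δ / 2, by positivity, fun h hh => ?_⟩
  have hδ2 : δ / 2 < δ := by linarith
  set f : E → F := fun x => m (φ0 + x) - m φ0 - M x - (2⁻¹ : ℝ) • B x x with hf
  have hfd : ∀ x : E, HasFDerivAt f (g (φ0 + x) - M - B x) x := by
    intro x
    have A1 : HasFDerivAt (fun y : E => m (φ0 + y)) (g (φ0 + x)) x := by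
      have := ((hdiff (φ0 + x)).hasFDerivAt).comp x ((hasFDerivAt_id x).const_add φ0)
      simpa [Function.comp_def] using this
    have A3 : HasFDerivAt (fun y : E => (2⁻¹ : ℝ) • B y y) (B x) x := by
      have hbb := (isBoundedBilinearMap_apply (𝕜 := ℝ) (E := E) (F := F)).hasFDerivAt
        ((B x : E →L[ℝ] F), x)
      have hpair : HasFDerivAt (fun y : E => ((B y : E →L[ℝ] F), y))
          (B.prod (ContinuousLinearMap.id ℝ E)) x :=
        (B.hasFDerivAt : HasFDerivAt B B x).prodMk (hasFDerivAt_id x)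
      have hcomp0 : HasFDerivAt (fun y : E => (B y) y)
          ((((isBoundedBilinearMap_apply (𝕜 := ℝ) (E := E) (F := F)).deriv
            ((B x : E →L[ℝ] F), x)).comp (B.prod (ContinuousLinearMap.id ℝ E)))) x :=
        HasFDerivAt.comp (f := fun y : E => ((B y : E →L[ℝ] F), y)) x hbb hpair
      have hcomp := hcomp0.const_smul (2⁻¹ : ℝ)
      have heq : (2⁻¹ : ℝ) • (((isBoundedBilinearMap_apply (𝕜 := ℝ) (E := E)
            (F := F)).deriv ((B x : E →L[ℝ] F), x)).comp
            (B.prod (ContinuousLinearMap.id ℝ E))) = B x := by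
        ext k
        simp only [ContinuousLinearMap.smul_apply, ContinuousLinearMap.comp_apply,
          ContinuousLinearMap.prod_apply, ContinuousLinearMap.coe_id', id_eq,
          IsBoundedBilinearMap.deriv_apply]
        rw [hsymm k x]
        module
      rw [heq] at hcomp
      exact hcomp
    have hall := ((A1.sub_const (m φ0)).sub M.hasFDerivAt).sub A3
    exact hall
  have hball : Convex ℝ (Metric.closedBall (0 : E) ‖h‖) := convex_closedBall _ _
  have key := Convex.norm_image_sub_le_of_norm_hasFDerivWithin_le
    (f' := fun x => g (φ0 + x) - M - B x) (y := h) (x := (0 : E))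
    (fun x hx => (hfd x).hasFDerivWithinAt)
    (C := ε * ‖h‖)
    (fun x hx => by
      have hxh : ‖x‖ ≤ ‖h‖ := by simpa using hx
      have hdist : dist (φ0 + x) φ0 < δ := by
        rw [dist_eq_norm, add_sub_cancel_left]
        exact lt_of_le_of_lt (le_trans hxh hh) hδ2
      have := hδ (φ0 + x) hdist
      rw [add_sub_cancel_left] at this
      calc ‖g (φ0 + x) - M - B x‖ ≤ ε * ‖x‖ := this
        _ ≤ ε * ‖h‖ := by nlinarith [norm_nonneg x, norm_nonneg h]
      )
    hball
    (Metric.mem_closedBall_self (norm_nonneg h))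
    (by simp [Metric.mem_closedBall])
  have hf0 : f 0 = 0 := by simp [hf]
  rw [hf0, sub_zero, sub_zero] at key
  have hrw : ε * ‖h‖ * ‖h‖ = ε * ‖h‖ ^ 2 := by ring
  rw [hrw] at key
  exact key

end Aux

/-- Dovonon–Renault: if `m` is `C²` and the second-order local
identification condition holds at `φ₀` — for all `u` in the range of the
adjoint of the Jacobian and `v` in its kernel,
`M u + (v' M_k⁽²⁾ v)_k = 0` implies `u = v = 0` — then there is no sequence
`φₙ → φ₀`, `φₙ ≠ φ₀`, with `m(φₙ) = m(φ₀)` for all `n`. -/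
theorem stmt_15 {p q : ℕ}
    (m : EuclideanSpace ℝ (Fin p) → EuclideanSpace ℝ (Fin q))
    (hm : ContDiff ℝ 2 m) (φ0 : EuclideanSpace ℝ (Fin p))
    (hid : ∀ u v : EuclideanSpace ℝ (Fin p),
      u ∈ Set.range (ContinuousLinearMap.adjoint (fderiv ℝ m φ0)) →
      (fderiv ℝ m φ0) v = 0 →
      (fderiv ℝ m φ0) u + iteratedFDeriv ℝ 2 m φ0 ![v, v] = 0 →
      u = 0 ∧ v = 0) :
    ¬ ∃ φn : ℕ → EuclideanSpace ℝ (Fin p),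
      (∀ n, φn n ≠ φ0) ∧ Tendsto φn atTop (nhds φ0) ∧ ∀ n, m (φn n) = m φ0 := by
  rintro ⟨φn, hne, htend, heq⟩
  set M : EuclideanSpace ℝ (Fin p) →L[ℝ] EuclideanSpace ℝ (Fin q) := fderiv ℝ m φ0 with hMdef
  set B : EuclideanSpace ℝ (Fin p) →L[ℝ] EuclideanSpace ℝ (Fin p) →L[ℝ] EuclideanSpace ℝ (Fin q) := fderiv ℝ (fderiv ℝ m) φ0 with hBdef
  -- direction sequence on the unit sphere
  have hsub : ∀ n, φn n - φ0 ≠ 0 := fun n => sub_ne_zero.2 (hne n)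
  set d : ℕ → EuclideanSpace ℝ (Fin p) := fun n => ‖φn n - φ0‖⁻¹ • (φn n - φ0) with hddef
  have hd : ∀ n, d n ∈ Metric.sphere (0 : EuclideanSpace ℝ (Fin p)) 1 := by
    intro n
    simp only [hddef, Metric.mem_sphere, dist_zero_right, norm_smul, norm_inv, norm_norm]
    rw [inv_mul_cancel₀ (norm_ne_zero_iff.2 (hsub n))]
  obtain ⟨l, hl, ψ, hψ, hdl⟩ := (isCompact_sphere (0 : EuclideanSpace ℝ (Fin p)) 1).tendsto_subseq hd
  have hlnorm : ‖l‖ = 1 := by simpa [dist_zero_right] using hl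
  -- work with subsequence
  set h : ℕ → EuclideanSpace ℝ (Fin p) := fun n => φn (ψ n) - φ0 with hhdef
  set t : ℕ → ℝ := fun n => ‖h n‖ with htdef
  have ht0 : ∀ n, 0 < t n := fun n => norm_pos_iff.2 (hsub (ψ n))
  have hhe : ∀ n, h n = t n • (d ∘ ψ) n := by
    intro n
    simp only [htdef, hddef, hhdef, Function.comp_apply]
    rw [smul_smul, mul_inv_cancel₀ (norm_ne_zero_iff.2 (hsub (ψ n))), one_smul]
  have htt : Tendsto t atTop (nhds 0) := by
    have : Tendsto (fun n => ‖φn n - φ0‖) atTop (nhds 0) :=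
      (tendsto_iff_norm_sub_tendsto_zero.1 htend)
    exact this.comp hψ.tendsto_atTop
  -- the key equation from Taylor
  have hmeq : ∀ n, m (φ0 + h n) = m φ0 := by
    intro n; simp only [hhdef, add_sub_cancel]; exact heq (ψ n)
  have htay : ∀ ε > (0:ℝ), ∀ᶠ n in atTop,
      ‖M (h n) + (2⁻¹ : ℝ) • B (h n) (h n)‖ ≤ ε * (t n) ^ 2 := by
    intro ε hε
    obtain ⟨δ, hδ, hbound⟩ := taylor2 hm φ0 hε
    filter_upwards [htt.eventually (eventually_le_nhds hδ)] with n hnδ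
    have h1 := hbound (h n) (by simpa [htdef] using hnδ)
    rw [hmeq n, sub_self, zero_sub, ← hMdef, ← hBdef] at h1
    have h2 : -(M (h n)) - (2⁻¹ : ℝ) • B (h n) (h n)
        = -(M (h n) + (2⁻¹ : ℝ) • B (h n) (h n)) := by abel
    rw [h2, norm_neg] at h1
    exact h1
  -- Stage 1 : M l = 0
  have hMl : M l = 0 := by
    have h1 : Tendsto (fun n => M ((d ∘ ψ) n)) atTop (nhds (M l)) :=
      (M.continuous.tendsto l).comp hdl
    have h2 : Tendsto (fun n => M ((d ∘ ψ) n)) atTop (nhds 0) := by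
      have hg0 : Tendsto (fun n => (1 + 2⁻¹ * ‖B‖) * t n) atTop (nhds 0) := by
        simpa using htt.const_mul (1 + 2⁻¹ * ‖B‖)
      refine squeeze_zero_norm' ?_ hg0
      · filter_upwards [htay 1 one_pos] with n hX
        have htn := ht0 n
        have hB2 := B.le_opNorm₂ (h n) (h n)
        have hBh : ‖(2⁻¹ : ℝ) • B (h n) (h n)‖ ≤ 2⁻¹ * ‖B‖ * t n ^ 2 := by
          rw [norm_smul]
          have h2n : ‖(2⁻¹ : ℝ)‖ = 2⁻¹ := by
            rw [Real.norm_eq_abs, abs_of_pos]; norm_num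
          rw [h2n]
          nlinarith [norm_nonneg (B (h n) (h n))]
        have hMhn : ‖M (h n)‖ ≤ (1 + 2⁻¹ * ‖B‖) * t n ^ 2 := by
          have hMh : M (h n) = (M (h n) + (2⁻¹ : ℝ) • B (h n) (h n))
              - (2⁻¹ : ℝ) • B (h n) (h n) := by abel
          rw [hMh]
          refine (norm_sub_le _ _).trans ?_
          nlinarith [hX, hBh]
        have hMe : M ((d ∘ ψ) n) = (t n)⁻¹ • M (h n) := by
          have hde : (d ∘ ψ) n = (t n)⁻¹ • h n := rfl
          rw [hde, map_smul]
        rw [hMe, norm_smul, norm_inv, Real.norm_eq_abs, abs_of_pos htn]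
        calc (t n)⁻¹ * ‖M (h n)‖ ≤ (t n)⁻¹ * ((1 + 2⁻¹ * ‖B‖) * t n ^ 2) :=
              mul_le_mul_of_nonneg_left hMhn (by positivity)
          _ = (1 + 2⁻¹ * ‖B‖) * t n := by field_simp
    exact tendsto_nhds_unique h1 h2
  -- Stage 2 : B l l is orthogonal to ker M†
  have hperp : ∀ w : EuclideanSpace ℝ (Fin q), ContinuousLinearMap.adjoint M w = 0 →
      inner ℝ (B l l) w = (0:ℝ) := by
    intro w hw
    have hMh0 : ∀ n, (inner ℝ (M (h n)) w : ℝ) = 0 := by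
      intro n
      rw [← ContinuousLinearMap.adjoint_inner_right M, hw, inner_zero_right]
    have hBc : Continuous fun x : EuclideanSpace ℝ (Fin p) => (B x) x :=
      isBoundedBilinearMap_apply.continuous.comp (B.continuous.prodMk continuous_id)
    have hcont : Tendsto (fun n => (inner ℝ (B ((d ∘ ψ) n) ((d ∘ ψ) n)) w : ℝ)) atTop
        (nhds (inner ℝ (B l l) w : ℝ)) :=
      ((hBc.inner continuous_const).tendsto l).comp hdl
    have hzero : Tendsto (fun n => (inner ℝ (B ((d ∘ ψ) n) ((d ∘ ψ) n)) w : ℝ)) atTop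
        (nhds 0) := by
      rw [NormedAddCommGroup.tendsto_nhds_zero]
      intro ε hε
      have hwpos : (0:ℝ) < 4 * (‖w‖ + 1) := by positivity
      have hε' : 0 < ε / (4 * (‖w‖ + 1)) := div_pos hε hwpos
      filter_upwards [htay _ hε'] with n hX
      have htn := ht0 n
      have hsm : B (h n) (h n) = (t n * t n) • B ((d ∘ ψ) n) ((d ∘ ψ) n) := by
        rw [hhe n]
        simp only [map_smul, ContinuousLinearMap.smul_apply, smul_smul]
      set c : ℝ := ε / (4 * (‖w‖ + 1)) with hcdef
      set a := (inner ℝ (B ((d ∘ ψ) n) ((d ∘ ψ) n)) w : ℝ) with ha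
      have hInner : (inner ℝ (M (h n) + (2⁻¹ : ℝ) • B (h n) (h n)) w : ℝ)
          = 2⁻¹ * (t n * t n) * a := by
        rw [inner_add_left, hMh0 n, zero_add, real_inner_smul_left, hsm,
          real_inner_smul_left]
        ring
      have h4 : |(inner ℝ (M (h n) + (2⁻¹ : ℝ) • B (h n) (h n)) w : ℝ)|
          ≤ c * t n ^ 2 * ‖w‖ :=
        (abs_real_inner_le_norm _ _).trans
          (mul_le_mul_of_nonneg_right hX (norm_nonneg w))
      rw [hInner, abs_mul, abs_mul,
        abs_of_nonneg (by norm_num : (0:ℝ) ≤ (2⁻¹ : ℝ)),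
        abs_of_nonneg (mul_nonneg htn.le htn.le)] at h4
      have ht2 : (0:ℝ) < t n ^ 2 := pow_pos htn 2
      have h8 : t n ^ 2 * (2⁻¹ * |a|) ≤ t n ^ 2 * (c * ‖w‖) := by
        calc t n ^ 2 * (2⁻¹ * |a|) = 2⁻¹ * (t n * t n) * |a| := by ring
          _ ≤ c * t n ^ 2 * ‖w‖ := h4
          _ = t n ^ 2 * (c * ‖w‖) := by ring
      have h9 := le_of_mul_le_mul_left h8 ht2
      have h7 : |a| ≤ 2 * (c * ‖w‖) := by linarith
      have hc' : ε = 4 * (c * ‖w‖) + 4 * c := by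
        rw [hcdef]
        field_simp
      have hcw : (0:ℝ) ≤ c * ‖w‖ := mul_nonneg hε'.le (norm_nonneg w)
      rw [Real.norm_eq_abs]
      linarith [h7, hcw, hε']
    exact tendsto_nhds_unique hcont hzero
  -- Stage 3 : solve and apply hid
  obtain ⟨y, hy⟩ := exists_adjoint_solution M (B l l) hperp
  have h20 : iteratedFDeriv ℝ 2 m φ0 ![l, l] = B l l := by
    rw [iteratedFDeriv_two_apply]
    simp [hBdef]
  have := hid (ContinuousLinearMap.adjoint M (-y)) l
    ⟨-y, rfl⟩ hMl (by rw [map_neg, map_neg, h20, neg_add_eq_zero]; exact hy)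
  rw [this.2, norm_zero] at hlnorm
  exact one_ne_zero hlnorm.symm
end
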